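/- arXiv:2502.19855 — 5 statements merged into one kernel-verified Lean document; each statement's English description precedes it below -/
import Mathlib

section
/- Let x ∈ H with ‖x‖_A = 1 and let q ∈ D. Then there exists z ∈ H with ‖z‖_A = 1 and ⟨x,z⟩_A = 0; consequently the vector y = conj(q)·x + √(1−|q|²)·z satisfies ‖y‖_A = 1 and ⟨x,y⟩_A = q. -/
noncomputable section

open Filter

variable {H : Type*} [NormedAddCommGroup H] [InnerProductSpace ℂ H] [CompleteSpace H]

/-- The paper's semi-inner product `⟨x, y⟩_A = ⟨A x, y⟩`, where the inner product of the
paper is linear in the *first* argument; in Mathlib's convention this is `⟪y, A x⟫_ℂ`. -/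
def sipA (A : H →L[ℂ] H) (x y : H) : ℂ := inner ℂ y (A x)

/-- The `A`-seminorm `‖x‖_A = ⟨A x, x⟩ ^ (1/2)`. -/
def semiNormA (A : H →L[ℂ] H) (x : H) : ℝ := Real.sqrt (sipA A x x).re

/-- The `A`-`q`-numerical range `W_{q,A}(T)`. -/
def WqA (A : H →L[ℂ] H) (q : ℂ) (T : H →L[ℂ] H) : Set ℂ :=
  {z | ∃ x y : H, semiNormA A x = 1 ∧ semiNormA A y = 1 ∧ sipA A x y = q ∧ z = sipA A (T x) y}

/-- The `A`-`q`-numerical radius `w_{q,A}(T)`. -/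
def wqA (A : H →L[ℂ] H) (q : ℂ) (T : H →L[ℂ] H) : ℝ := sSup ((fun w : ℂ => ‖w‖) '' WqA A q T)

/-- The `A`-operator seminorm `‖T‖_A = sup {‖T x‖_A : ‖x‖_A ≤ 1}`. -/
def opNormA (A T : H →L[ℂ] H) : ℝ :=
  sSup ((fun x => semiNormA A (T x)) '' {x : H | semiNormA A x ≤ 1})

/-- `T` is `A`-bounded: `‖T x‖_A ≤ c ‖x‖_A` for some `c > 0`. -/
def ABounded (A T : H →L[ℂ] H) : Prop := ∃ c > 0, ∀ x : H, semiNormA A (T x) ≤ c * semiNormA A x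

lemma posA_ker (A : H →L[ℂ] H) (hA : A.IsPositive) (v : H)
    (h : (inner ℂ v (A v) : ℂ).re = 0) : A v = 0 := by
  have hsym := hA.1
  set a : ℝ := (inner ℂ (A (A v)) (A v) : ℂ).re with ha
  set b : ℝ := (inner ℂ (A v) (A v) : ℂ).re with hb
  have hAvv : (inner ℂ (A v) v : ℂ).re = 0 := by
    have := inner_re_symm (𝕜 := ℂ) (A v) v
    simpa [h] using this
  have hA2 : (inner ℂ (A (A v)) v : ℂ) = inner ℂ (A v) (A v) := hsym (A v) v
  have hkey : ∀ t : ℝ, 0 ≤ a * t ^ 2 + 2 * b * t := by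
    intro t
    have h0 := hA.re_inner_nonneg_left (v + (t : ℂ) • A v)
    have hexp : (inner ℂ (A (v + (t : ℂ) • A v)) (v + (t : ℂ) • A v) : ℂ).re
        = a * t ^ 2 + 2 * b * t + (inner ℂ (A v) v : ℂ).re := by
      simp only [map_add, map_smul, inner_add_left, inner_add_right, inner_smul_left,
        inner_smul_right, hA2, Complex.conj_ofReal, Complex.add_re, Complex.mul_re,
        Complex.ofReal_re, Complex.ofReal_im]
      ring
    simp only [RCLike.re_to_complex] at h0
    rw [hexp, hAvv, add_zero] at h0
    exact h0
  have ha0 : 0 ≤ a := by simpa using hA.re_inner_nonneg_left (A v)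
  have hb0 : 0 ≤ b := by exact inner_self_nonneg (𝕜 := ℂ) (x := A v)
  have hbz : b = 0 := by
    have hT := hkey (-(b / (a + 1)))
    have hpos : (0:ℝ) < a + 1 := by linarith
    have h3 : (a * (-(b/(a+1)))^2 + 2*b*(-(b/(a+1)))) * (a+1)^2
        = a*b^2 - 2*b^2*(a+1) := by field_simp; ring
    have h4 : 0 ≤ a*b^2 - 2*b^2*(a+1) := by
      rw [← h3]; exact mul_nonneg hT (sq_nonneg _)
    nlinarith [sq_nonneg b, mul_nonneg ha0 (sq_nonneg b)]
  have : ‖A v‖ ^ 2 = 0 := by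
    rw [← inner_self_eq_norm_sq (𝕜 := ℂ) (A v)]; exact hbz
  simpa using pow_eq_zero_iff (n := 2) (by norm_num) |>.mp this

lemma real_inner_selfadj (A : H →L[ℂ] H) (hsym : (A : H →ₗ[ℂ] H).IsSymmetric) (v : H) :
    (inner ℂ v (A v) : ℂ) = ((inner ℂ v (A v) : ℂ).re : ℂ) := by
  have h1 : (starRingEnd ℂ) (inner ℂ v (A v) : ℂ) = inner ℂ v (A v) := by
    rw [inner_conj_symm]; exact hsym v v
  exact (Complex.conj_eq_iff_re.mp h1).symm

lemma exists_w (A : H →L[ℂ] H) (hA : A.IsPositive)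
    (hrank : 2 ≤ Module.rank ℂ (LinearMap.range A.toLinearMap)) (x : H) :
    ∃ w : H, (inner ℂ (w - (inner ℂ (A x) w : ℂ) • x) (A (w - (inner ℂ (A x) w : ℂ) • x)) : ℂ).re ≠ 0 := by
  by_contra hcon
  push_neg at hcon
  have hker : ∀ w : H, A w = (inner ℂ (A x) w : ℂ) • A x := by
    intro w
    have := posA_ker A hA _ (hcon w)
    have h2 : A (w - (inner ℂ (A x) w : ℂ) • x) = A w - (inner ℂ (A x) w : ℂ) • A x := by
      simp [map_sub, map_smul]
    rw [h2, sub_eq_zero] at this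
    exact this
  have hle : LinearMap.range A.toLinearMap ≤ Submodule.span ℂ {A x} := by
    rintro u ⟨w, rfl⟩
    rw [show A.toLinearMap w = A w from rfl, hker w]
    exact Submodule.smul_mem _ _ (Submodule.mem_span_singleton_self _)
  have h1 : Module.rank ℂ (LinearMap.range A.toLinearMap)
      ≤ Module.rank ℂ (Submodule.span ℂ ({A x} : Set H)) := Submodule.rank_mono hle
  have h2 : Module.rank ℂ (Submodule.span ℂ ({A x} : Set H)) ≤ 1 := by
    simpa using rank_span_le (R := ℂ) ({A x} : Set H)
  have : (2 : Cardinal) ≤ 1 := le_trans hrank (le_trans h1 h2)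
  norm_num at this

theorem stmt_0 (A : H →L[ℂ] H) (hA : A.IsPositive)
    (hrank : 2 ≤ Module.rank ℂ (LinearMap.range A.toLinearMap))
    (q : ℂ) (hq : ‖q‖ ≤ 1)
    (x : H) (hx : semiNormA A x = 1) :
    ∃ z : H, semiNormA A z = 1 ∧ sipA A x z = 0 ∧
      semiNormA A ((starRingEnd ℂ) q • x + (Real.sqrt (1 - ‖q‖ ^ 2) : ℂ) • z) = 1 ∧
      sipA A x ((starRingEnd ℂ) q • x + (Real.sqrt (1 - ‖q‖ ^ 2) : ℂ) • z) = q := by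
  have hsym := hA.1
  -- inner x (A x) = 1
  have hre1 : (inner ℂ x (A x) : ℂ).re = 1 := by
    have h0 : 0 ≤ (inner ℂ x (A x) : ℂ).re := by
      simpa using hA.re_inner_nonneg_right x
    have := hx
    unfold semiNormA sipA at this
    nlinarith [Real.sq_sqrt h0, Real.sqrt_nonneg ((inner ℂ x (A x) : ℂ).re)]
  have hxx : (inner ℂ x (A x) : ℂ) = 1 := by
    rw [real_inner_selfadj A hsym x, hre1]; norm_num
  -- find v
  obtain ⟨w, hw⟩ := exists_w A hA hrank x
  set v : H := w - (inner ℂ (A x) w : ℂ) • x with hv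
  -- v is A-orthogonal to x
  have hv0 : (inner ℂ v (A x) : ℂ) = 0 := by
    rw [hv, inner_sub_left, inner_smul_left, inner_conj_symm, hxx, mul_one, sub_self]
  -- normalize
  have hvre : 0 < (inner ℂ v (A v) : ℂ).re := by
    rcases lt_or_eq_of_le (by simpa using hA.re_inner_nonneg_right v) with h | h
    · exact h
    · exact absurd h.symm hw
  set t : ℝ := Real.sqrt ((inner ℂ v (A v) : ℂ).re) with htdef
  have ht : 0 < t := Real.sqrt_pos.mpr hvre
  have ht2 : t ^ 2 = (inner ℂ v (A v) : ℂ).re := Real.sq_sqrt hvre.le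
  set z : H := ((t⁻¹ : ℝ) : ℂ) • v with hz
  have hzz : (inner ℂ z (A z) : ℂ) = 1 := by
    rw [hz, map_smul, inner_smul_left, inner_smul_right, Complex.conj_ofReal,
      real_inner_selfadj A hsym v]
    rw [← Complex.ofReal_mul, ← Complex.ofReal_mul]
    norm_cast
    field_simp
    nlinarith [ht2]
  have hzn : semiNormA A z = 1 := by
    unfold semiNormA sipA; rw [hzz]; norm_num
  have hxz : sipA A x z = 0 := by
    unfold sipA
    rw [hz, inner_smul_left, hv0, mul_zero]
  -- inner x (A z) = 0 too
  have hxz' : (inner ℂ x (A z) : ℂ) = 0 := by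
    have h1 : (inner ℂ x (A z) : ℂ) = inner ℂ (A x) z := (hsym x z).symm
    rw [h1, ← inner_conj_symm, show (inner ℂ z (A x) : ℂ) = 0 from hxz, map_zero]
  refine ⟨z, hzn, hxz, ?_, ?_⟩
  · -- seminorm of y
    set r : ℝ := Real.sqrt (1 - ‖q‖ ^ 2) with hrdef
    have hr2 : r ^ 2 = 1 - ‖q‖ ^ 2 := by
      apply Real.sq_sqrt
      nlinarith [hq, norm_nonneg q]
    have hyy : (inner ℂ ((starRingEnd ℂ) q • x + (r : ℂ) • z)
        (A ((starRingEnd ℂ) q • x + (r : ℂ) • z)) : ℂ) = 1 := by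
      simp only [map_add, map_smul, inner_add_left, inner_add_right, inner_smul_left,
        inner_smul_right, hxx, hzz, hxz', show (inner ℂ z (A x) : ℂ) = 0 from hxz,
        Complex.conj_ofReal, Complex.conj_conj, mul_one, mul_zero, add_zero, zero_add]
      have h1 : q * (starRingEnd ℂ) q = ((‖q‖ ^ 2 : ℝ) : ℂ) := by
        rw [Complex.mul_conj]
        norm_cast
        rw [Complex.sq_norm]
      have h2 : ((r : ℂ) * r) = ((r ^ 2 : ℝ) : ℂ) := by push_cast; ring
      rw [mul_comm ((starRingEnd ℂ) q) q, h1, h2, hr2]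
      push_cast
      ring
    unfold semiNormA sipA
    rw [hyy]; norm_num
  · unfold sipA
    rw [inner_add_left, inner_smul_left, inner_smul_left, Complex.conj_conj, hxx,
      show (inner ℂ z (A x) : ℂ) = 0 from hxz, mul_zero, add_zero, mul_one]
end
end

section
/- Let T be a bounded operator on a complex Hilbert space H with T² = 0, and let q ∈ D. Then W_q(T) is circular about the origin: for every λ ∈ W_q(T) and every θ ∈ ℝ, one has e^{iθ}λ ∈ W_q(T). -/
noncomputable section

/-- The `q`-numerical range `W_q(T) = {⟨T x, y⟩ : ‖x‖ = ‖y‖ = 1, ⟨x, y⟩ = q}`, where the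
paper's inner product `⟨u, v⟩` (linear in the first argument) is Mathlib's `⟪v, u⟫_ℂ`. -/
def Wq {E : Type*} [NormedAddCommGroup E] [InnerProductSpace ℂ E]
    (q : ℂ) (T : E →L[ℂ] E) : Set ℂ :=
  {z | ∃ x y : E, ‖x‖ = 1 ∧ ‖y‖ = 1 ∧ (inner ℂ y x : ℂ) = q ∧ z = (inner ℂ y (T x) : ℂ)}

/-- The `q`-numerical radius `w_q(T)`. -/
def wq {E : Type*} [NormedAddCommGroup E] [InnerProductSpace ℂ E]
    (q : ℂ) (T : E →L[ℂ] E) : ℝ := sSup ((fun z : ℂ => ‖z‖) '' Wq q T)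

lemma norm_add_smul_of_inner_zero {E : Type*} [NormedAddCommGroup E] [InnerProductSpace ℂ E]
    {a b : E} (h : (inner ℂ a b : ℂ) = 0) {c : ℂ} (hc : ‖c‖ = 1) :
    ‖a + c • b‖ = ‖a + b‖ := by
  have h1 := norm_add_sq (𝕜 := ℂ) a (c • b)
  have h2 := norm_add_sq (𝕜 := ℂ) a b
  have hin : (inner ℂ a (c • b) : ℂ) = 0 := by rw [inner_smul_right, h, mul_zero]
  have hcb : ‖c • b‖ = ‖b‖ := by rw [norm_smul, hc, one_mul]
  rw [hin, hcb] at h1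
  rw [h] at h2
  simp only [map_zero] at h1 h2
  nlinarith [norm_nonneg (a + c • b), norm_nonneg (a + b)]

theorem stmt_14 {H : Type*} [NormedAddCommGroup H] [InnerProductSpace ℂ H] [CompleteSpace H]
    (T : H →L[ℂ] H) (hT2 : T * T = 0)
    (q : ℂ) (hq : ‖q‖ ≤ 1) :
    ∀ lam ∈ Wq q T, ∀ θ : ℝ, Complex.exp (θ * Complex.I) * lam ∈ Wq q T := by
  intro lam hlam θ
  obtain ⟨x, y, hx, hy, hqxy, hlamEq⟩ := hlam
  set K := T.ker with hK
  haveI : CompleteSpace K := (ContinuousLinearMap.isClosed_ker T).completeSpace_coe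
  set u : H := (K.orthogonalProjection x : H) with hud
  set v : H := x - u with hvd
  set s : H := (K.orthogonalProjection y : H) with hsd
  set t : H := y - s with htd
  have hu : u ∈ K := Submodule.coe_mem _
  have hs : s ∈ K := Submodule.coe_mem _
  have hv : v ∈ Kᗮ := Submodule.sub_starProjection_mem_orthogonal x
  have ht : t ∈ Kᗮ := Submodule.sub_starProjection_mem_orthogonal y
  have hxuv : x = u + v := by rw [hvd]; abel
  have hyst : y = s + t := by rw [htd]; abel
  have hTu : T u = 0 := hu
  have hTx : T x ∈ K := by
    show T (T x) = 0
    have : (T * T) x = 0 := by rw [hT2]; rfl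
    exact this
  set c : ℂ := Complex.exp (θ * Complex.I) with hcd
  have hc : ‖c‖ = 1 := by
    rw [hcd]
    simpa using Complex.norm_exp_ofReal_mul_I θ
  have hcc : (starRingEnd ℂ) c * c = 1 := by
    rw [← Complex.normSq_eq_conj_mul_self, Complex.normSq_eq_norm_sq, hc]
    norm_num
  have hsv : (inner ℂ s v : ℂ) = 0 := Submodule.inner_right_of_mem_orthogonal hs hv
  have htu : (inner ℂ t u : ℂ) = 0 := Submodule.inner_left_of_mem_orthogonal hu ht
  have huv0 : (inner ℂ u v : ℂ) = 0 := Submodule.inner_right_of_mem_orthogonal hu hv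
  have hst : (inner ℂ s t : ℂ) = 0 := Submodule.inner_right_of_mem_orthogonal hs ht
  have htTx : (inner ℂ t (T x) : ℂ) = 0 := Submodule.inner_left_of_mem_orthogonal hTx ht
  refine ⟨u + c • v, s + c • t, ?_, ?_, ?_, ?_⟩
  · rw [norm_add_smul_of_inner_zero huv0 hc, ← hxuv, hx]
  · rw [norm_add_smul_of_inner_zero hst hc, ← hyst, hy]
  · rw [← hqxy, hyst, hxuv]
    simp only [inner_add_left, inner_add_right, inner_smul_left, inner_smul_right,
      hsv, htu, mul_zero, add_zero, zero_add]
    linear_combination (inner ℂ t v : ℂ) * hcc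
  · rw [hlamEq]
    have hTx' : T (u + c • v) = c • T x := by
      rw [map_add, map_smul, hTu, zero_add]
      congr 1
      rw [hxuv, map_add, hTu, zero_add]
    rw [hTx', hyst]
    simp only [inner_add_left, inner_smul_left, inner_smul_right, htTx, mul_zero, add_zero]
    try linear_combination (0 : ℂ)
    try ring
end
end

section
/- Let T be a bounded operator on a complex Hilbert space H with T² = 0, and let q ∈ D. Then w_q(T) ≤ ((1 + √(1−|q|²))/2)·‖T‖. -/
noncomputable section

private lemma key_arith (a b c d Q : ℝ) (ha : 0 ≤ a) (hb : 0 ≤ b) (hc : 0 ≤ c) (hd : 0 ≤ d)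
    (h1 : a ^ 2 + c ^ 2 = 1) (h2 : b ^ 2 + d ^ 2 = 1) (hQ : 0 ≤ Q)
    (hcon : Q ≤ a * d + b * c) :
    a * b ≤ (1 + Real.sqrt (1 - Q ^ 2)) / 2 := by
  have hid : (a * b - c * d) ^ 2 + (a * d + b * c) ^ 2 = (a ^ 2 + c ^ 2) * (b ^ 2 + d ^ 2) := by
    ring
  have hsq : (a * b - c * d) ^ 2 ≤ 1 - Q ^ 2 := by
    have hQ2 : Q ^ 2 ≤ (a * d + b * c) ^ 2 := by nlinarith
    nlinarith
  have h3 : a * b - c * d ≤ Real.sqrt (1 - Q ^ 2) := by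
    calc a * b - c * d ≤ |a * b - c * d| := le_abs_self _
    _ = Real.sqrt ((a * b - c * d) ^ 2) := (Real.sqrt_sq_eq_abs _).symm
    _ ≤ Real.sqrt (1 - Q ^ 2) := Real.sqrt_le_sqrt hsq
  have h4 : a * b + c * d ≤ 1 := by nlinarith [sq_nonneg (a - b), sq_nonneg (c - d)]
  linarith

theorem stmt_15 {H : Type*} [NormedAddCommGroup H] [InnerProductSpace ℂ H] [CompleteSpace H]
    (T : H →L[ℂ] H) (hT2 : T * T = 0)
    (q : ℂ) (hq : ‖q‖ ≤ 1) :
    wq q T ≤ (1 + Real.sqrt (1 - ‖q‖ ^ 2)) / 2 * ‖T‖ := by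
  have hM0 : 0 ≤ (1 + Real.sqrt (1 - ‖q‖ ^ 2)) / 2 := by positivity
  apply Real.sSup_le
  · rintro r ⟨z, ⟨x, y, hx, hy, hqxy, rfl⟩, rfl⟩
    set K := LinearMap.ker (T : H →ₗ[ℂ] H) with hK
    haveI : CompleteSpace K := T.isClosed_ker.completeSpace_coe
    set u : H := (K.orthogonalProjectionOnto x : H) with hu
    set v : H := x - u with hv
    set y₁ : H := (K.orthogonalProjectionOnto y : H) with hy₁
    set y₂ : H := y - y₁ with hy₂
    have huK : u ∈ K := (K.orthogonalProjectionOnto x).2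
    have hy₁K : y₁ ∈ K := (K.orthogonalProjectionOnto y).2
    have hvK : v ∈ Kᗮ := K.sub_starProjection_mem_orthogonal x
    have hy₂K : y₂ ∈ Kᗮ := K.sub_starProjection_mem_orthogonal y
    have hxuv : x = u + v := by simp [hv]
    have hyy : y = y₁ + y₂ := by simp [hy₂]
    -- T x ∈ ker T
    have hTxK : T x ∈ K := by
      rw [hK, LinearMap.mem_ker]
      have := DFunLike.congr_fun hT2 x
      simpa [ContinuousLinearMap.mul_apply] using this
    -- T x = T v
    have hTx : T x = T v := by
      have hTu : T u = 0 := huK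
      rw [hxuv, map_add, hTu, zero_add]
    -- norms decompositions
    have hnorm : ∀ (p w : H), p ∈ K → w ∈ Kᗮ → ‖p + w‖ ^ 2 = ‖p‖ ^ 2 + ‖w‖ ^ 2 := by
      intro p w hp hw
      have h0 : (inner ℂ p w : ℂ) = 0 := Submodule.inner_right_of_mem_orthogonal hp hw
      rw [@norm_add_sq ℂ, h0]
      simp
    have hx2 : ‖u‖ ^ 2 + ‖v‖ ^ 2 = 1 := by
      have := hnorm u v huK hvK
      rw [← hxuv, hx] at this
      simpa using this.symm
    have hy2 : ‖y₁‖ ^ 2 + ‖y₂‖ ^ 2 = 1 := by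
      have := hnorm y₁ y₂ hy₁K hy₂K
      rw [← hyy, hy] at this
      simpa using this.symm
    -- inner product of y with T x
    have hzy : (inner ℂ y (T x) : ℂ) = inner ℂ y₁ (T x) := by
      rw [hyy, inner_add_left]
      have : (inner ℂ y₂ (T x) : ℂ) = 0 :=
        Submodule.inner_left_of_mem_orthogonal hTxK hy₂K
      rw [this, add_zero]
    -- bound on q
    have hqeq : q = (inner ℂ y₁ u : ℂ) + inner ℂ y₂ v := by
      rw [← hqxy, hyy, hxuv]
      have h1 : (inner ℂ y₁ v : ℂ) = 0 :=
        Submodule.inner_right_of_mem_orthogonal hy₁K hvK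
      have h2 : (inner ℂ y₂ u : ℂ) = 0 :=
        Submodule.inner_left_of_mem_orthogonal huK hy₂K
      rw [inner_add_left, inner_add_right, inner_add_right, h1, h2]
      ring
    have hqb : ‖q‖ ≤ ‖v‖ * ‖y₂‖ + ‖y₁‖ * ‖u‖ := by
      rw [hqeq]
      calc ‖(inner ℂ y₁ u : ℂ) + inner ℂ y₂ v‖
          ≤ ‖(inner ℂ y₁ u : ℂ)‖ + ‖(inner ℂ y₂ v : ℂ)‖ := by
            exact norm_add_le _ _
        _ ≤ ‖y₁‖ * ‖u‖ + ‖y₂‖ * ‖v‖ := by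
            gcongr <;> simpa using norm_inner_le_norm (𝕜 := ℂ) _ _
        _ = ‖v‖ * ‖y₂‖ + ‖y₁‖ * ‖u‖ := by ring
    -- apply key arithmetic lemma with a = ‖v‖, b = ‖y₁‖, c = ‖u‖, d = ‖y₂‖
    have hab : ‖v‖ * ‖y₁‖ ≤ (1 + Real.sqrt (1 - ‖q‖ ^ 2)) / 2 :=
      key_arith ‖v‖ ‖y₁‖ ‖u‖ ‖y₂‖ ‖q‖ (norm_nonneg _) (norm_nonneg _)
        (norm_nonneg _) (norm_nonneg _) (by linarith) hy2 (norm_nonneg _) hqb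
    -- final estimate
    calc ‖(inner ℂ y (T x) : ℂ)‖
        = ‖(inner ℂ y₁ (T x) : ℂ)‖ := by rw [hzy]
      _ ≤ ‖y₁‖ * ‖T x‖ := by simpa using norm_inner_le_norm (𝕜 := ℂ) y₁ (T x)
      _ = ‖y₁‖ * ‖T v‖ := by rw [hTx]
      _ ≤ ‖y₁‖ * (‖T‖ * ‖v‖) := by
          gcongr
          exact T.le_opNorm v
      _ = ‖v‖ * ‖y₁‖ * ‖T‖ := by ring
      _ ≤ (1 + Real.sqrt (1 - ‖q‖ ^ 2)) / 2 * ‖T‖ := by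
          gcongr
  · positivity
end
end

section
/- Let H be a nontrivial complex Hilbert space, let S be a compact self-adjoint bounded operator on H, let q ∈ [0,1], and let K = H ⊕ H be the Hilbert-space direct sum. Define the bounded operator T on K by T(x₁, x₂) = (S x₂, 0). Then w_q(T) = ((1 + √(1−q²))/2)·‖S‖. -/
noncomputable section

open scoped ComplexConjugate

private lemma stmt18_scalar (A B C D q r : ℝ) (hA : 0 ≤ A) (hB : 0 ≤ B) (hC : 0 ≤ C) (hD : 0 ≤ D)
    (hx : A^2 + B^2 = 1) (hy : C^2 + D^2 = 1) (hq : q ≤ A*C + B*D) (hq0 : 0 ≤ q)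
    (hr0 : 0 ≤ r) (hr2 : r^2 = 1 - q^2) : B*C ≤ (1 + r)/2 := by
  have h1 : (B*C - A*D)^2 ≤ r^2 := by
    nlinarith [sq_nonneg (A*C + B*D - q), sq_nonneg (A*C + B*D + q),
      mul_nonneg (mul_nonneg hA hC) (mul_nonneg hB hD)]
  have h2 : B*C - A*D ≤ r := by nlinarith [sq_nonneg (B*C - A*D - r), sq_nonneg (B*C - A*D + r)]
  have h3 : (B*C + A*D)^2 ≤ 1 := by nlinarith [sq_nonneg (A*C - B*D)]
  have h4 : B*C + A*D ≤ 1 := by nlinarith [sq_nonneg (B*C + A*D - 1), sq_nonneg (B*C + A*D + 1)]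
  nlinarith [mul_nonneg hA hD]

private lemma stmt18_norm_le {H : Type*} [NormedAddCommGroup H] [InnerProductSpace ℂ H]
    [CompleteSpace H]
    (S : H →L[ℂ] H) (hS : IsSelfAdjoint S) (c : ℝ) (hc : 0 ≤ c)
    (h : ∀ e : H, ‖(inner ℂ e (S e) : ℂ)‖ ≤ c * ‖e‖^2) : ‖S‖ ≤ c := by
  have hsymm := hS.isSymmetric
  have step : ∀ x y : H, (inner ℂ y (S x) : ℂ).re ≤ c/2 * (‖x‖^2 + ‖y‖^2) := by
    intro x y
    set z : ℂ := inner ℂ y (S x) with hz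
    have e2 : (inner ℂ x (S y) : ℂ) = conj z := by
      rw [hz, ← inner_conj_symm]
      exact congrArg (starRingEnd ℂ) (hsymm y x)
    have e1 : (inner ℂ (x+y) (S (x+y)) : ℂ) - inner ℂ (x-y) (S (x-y)) = ((4 : ℝ) * z.re : ℝ) := by
      simp only [map_add, map_sub, inner_add_left, inner_add_right, inner_sub_left,
        inner_sub_right]
      rw [e2]
      have : z + conj z = (2*z.re : ℝ) := Complex.add_conj z
      push_cast at this ⊢
      linear_combination 2 * this
    have e3 : (4:ℝ) * z.re = (inner ℂ (x+y) (S (x+y)) : ℂ).re - (inner ℂ (x-y) (S (x-y)) : ℂ).re := by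
      have := congrArg Complex.re e1
      simpa using this.symm
    have b1 : (inner ℂ (x+y) (S (x+y)) : ℂ).re ≤ c * ‖x+y‖^2 :=
      le_trans (Complex.re_le_norm _) (h _)
    have b2 : -(inner ℂ (x-y) (S (x-y)) : ℂ).re ≤ c * ‖x-y‖^2 := by
      have h1 := le_trans (Complex.abs_re_le_norm (inner ℂ (x-y) (S (x-y)) : ℂ)) (h _)
      have h2 := neg_abs_le ((inner ℂ (x-y) (S (x-y)) : ℂ)).re
      linarith
    have par : ‖x+y‖^2 + ‖x-y‖^2 = 2*(‖x‖^2 + ‖y‖^2) := by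
      have := parallelogram_law_with_norm ℂ x y
      nlinarith [this]
    nlinarith
  apply S.opNorm_le_bound hc
  intro x
  by_cases hx : S x = 0
  · simp [hx]; positivity
  · have hx0 : x ≠ 0 := by rintro rfl; simp at hx
    have hxp : 0 < ‖x‖ := norm_pos_iff.mpr hx0
    set y : H := ((‖x‖ * ‖S x‖⁻¹ : ℝ) : ℂ) • S x with hy
    have hny : ‖y‖ = ‖x‖ := by
      rw [hy, norm_smul]
      simp only [Complex.norm_real, Real.norm_eq_abs,
        abs_of_nonneg (by positivity : (0:ℝ) ≤ ‖x‖ * ‖S x‖⁻¹)]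
      rw [mul_assoc, inv_mul_cancel₀ (norm_ne_zero_iff.2 hx), mul_one]
    have hre : (inner ℂ y (S x) : ℂ).re = ‖x‖ * ‖S x‖ := by
      have hss : (inner ℂ (S x) (S x) : ℂ) = ((‖S x‖^2 : ℝ) : ℂ) := by
        rw [inner_self_eq_norm_sq_to_K]; norm_cast
      rw [hy, inner_smul_left, Complex.conj_ofReal, hss, ← Complex.ofReal_mul,
        Complex.ofReal_re]
      have hsn : ‖S x‖ ≠ 0 := norm_ne_zero_iff.2 hx
      field_simp
    have hstep := step x y
    rw [hre, hny] at hstep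
    nlinarith [hstep, hxp]

private lemma stmt18_sq_one {t : ℝ} (h0 : 0 ≤ t) (h : t^2 = 1) : t = 1 := by
  have h1 : (t-1)*(t+1) = 0 := by nlinarith
  rcases mul_eq_zero.mp h1 with h2 | h2 <;> linarith

theorem stmt_18 {H : Type*} [NormedAddCommGroup H] [InnerProductSpace ℂ H] [CompleteSpace H]
    [Nontrivial H]
    (S : H →L[ℂ] H) (hScompact : IsCompactOperator S) (hSsa : IsSelfAdjoint S)
    (q : ℝ) (hq0 : 0 ≤ q) (hq1 : q ≤ 1)
    (T : WithLp 2 (H × H) →L[ℂ] WithLp 2 (H × H))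
    (hT : ∀ p : WithLp 2 (H × H),
      T p = (WithLp.equiv 2 (H × H)).symm (S ((WithLp.equiv 2 (H × H)) p).2, 0)) :
    wq (q : ℂ) T = (1 + Real.sqrt (1 - q ^ 2)) / 2 * ‖S‖ := by
  have hq2 : q^2 ≤ 1 := by nlinarith
  set r := Real.sqrt (1 - q^2) with hrdef
  have hr0 : 0 ≤ r := Real.sqrt_nonneg _
  have hr2 : r^2 = 1 - q^2 := Real.sq_sqrt (by linarith)
  have hr1 : r ≤ 1 := by nlinarith
  set a := Real.sqrt ((1-r)/2) with hadef
  set b := Real.sqrt ((1+r)/2) with hbdef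
  have ha0 : 0 ≤ a := Real.sqrt_nonneg _
  have hb0 : 0 ≤ b := Real.sqrt_nonneg _
  have ha2 : a^2 = (1-r)/2 := Real.sq_sqrt (by linarith)
  have hb2 : b^2 = (1+r)/2 := Real.sq_sqrt (by linarith)
  have hab : 2*(a*b) = q := by
    have h1 : (2*(a*b))^2 = q^2 := by nlinarith
    have h2 : 0 ≤ 2*(a*b) := by positivity
    rw [← Real.sqrt_sq h2, h1, Real.sqrt_sq hq0]
  set M := (1 + r) / 2 * ‖S‖ with hMdef
  set A := (fun z : ℂ => ‖z‖) '' Wq (q : ℂ) T with hAdef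
  -- generic membership
  have mem_gen : ∀ e : H, ‖e‖ = 1 →
      (1+r)/2 * ‖(inner ℂ e (S e) : ℂ)‖ ∈ A := by
    intro e he
    have hee : (inner ℂ e e : ℂ) = 1 := by
      rw [inner_self_eq_norm_sq_to_K, he]; norm_num
    set x : WithLp 2 (H × H) := (WithLp.equiv 2 (H × H)).symm ((a:ℂ) • e, (b:ℂ) • e) with hxdef
    set y : WithLp 2 (H × H) := (WithLp.equiv 2 (H × H)).symm ((b:ℂ) • e, (a:ℂ) • e) with hydef
    have hxn : ‖x‖ = 1 := by
      apply stmt18_sq_one (norm_nonneg x)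
      rw [WithLp.prod_norm_sq_eq_of_L2, hxdef]
      simp [WithLp.equiv_symm_apply, WithLp.toLp_fst, WithLp.toLp_snd, norm_smul, he,
        abs_of_nonneg ha0, abs_of_nonneg hb0]
      linarith [ha2, hb2]
    have hyn : ‖y‖ = 1 := by
      apply stmt18_sq_one (norm_nonneg y)
      rw [WithLp.prod_norm_sq_eq_of_L2, hydef]
      simp [WithLp.equiv_symm_apply, WithLp.toLp_fst, WithLp.toLp_snd, norm_smul, he,
        abs_of_nonneg ha0, abs_of_nonneg hb0]
      linarith [ha2, hb2]
    have hinner : (inner ℂ y x : ℂ) = (q : ℂ) := by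
      rw [WithLp.prod_inner_apply, hxdef, hydef]
      simp only [WithLp.equiv_symm_apply, WithLp.ofLp_toLp, WithLp.toLp_fst, WithLp.toLp_snd, inner_smul_left,
        inner_smul_right, Complex.conj_ofReal, hee]
      push_cast
      rw [← hab]
      push_cast
      ring
    have hTx : T x = (WithLp.equiv 2 (H × H)).symm ((b:ℂ) • S e, 0) := by
      rw [hT x, hxdef]
      congr 1
      simp [WithLp.equiv_symm_apply, WithLp.toLp_snd, map_smul]
    have hval : (inner ℂ y (T x) : ℂ) = ((b^2 : ℝ) : ℂ) * inner ℂ e (S e) := by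
      rw [hTx, WithLp.prod_inner_apply, hydef]
      simp only [WithLp.equiv_symm_apply, WithLp.ofLp_toLp, WithLp.toLp_fst, WithLp.toLp_snd, inner_smul_left,
        inner_smul_right, Complex.conj_ofReal, inner_zero_right]
      push_cast
      ring
    refine ⟨inner ℂ y (T x), ⟨x, y, hxn, hyn, hinner, rfl⟩, ?_⟩
    dsimp only
    rw [hval, norm_mul, Complex.norm_real, Real.norm_eq_abs, abs_of_nonneg (by positivity : (0:ℝ) ≤ b^2), hb2]
  -- upper bound
  have hub : ∀ t ∈ A, t ≤ M := by
    rintro t ⟨z, ⟨x, y, hxn, hyn, hqxy, rfl⟩, rfl⟩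
    have hnx : ‖x.fst‖^2 + ‖x.snd‖^2 = 1 := by
      rw [← WithLp.prod_norm_sq_eq_of_L2, hxn]; norm_num
    have hny : ‖y.fst‖^2 + ‖y.snd‖^2 = 1 := by
      rw [← WithLp.prod_norm_sq_eq_of_L2, hyn]; norm_num
    have hqle : q ≤ ‖x.fst‖ * ‖y.fst‖ + ‖x.snd‖ * ‖y.snd‖ := by
      have h1 : ‖(inner ℂ y x : ℂ)‖ = q := by rw [hqxy, Complex.norm_real, Real.norm_eq_abs, abs_of_nonneg hq0]
      rw [WithLp.prod_inner_apply] at h1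
      calc q = ‖((inner ℂ y.fst x.fst : ℂ) + inner ℂ y.snd x.snd)‖ := h1.symm
        _ ≤ ‖(inner ℂ y.fst x.fst : ℂ)‖ + ‖(inner ℂ y.snd x.snd : ℂ)‖ := norm_add_le _ _
        _ ≤ ‖x.fst‖ * ‖y.fst‖ + ‖x.snd‖ * ‖y.snd‖ := by
            have g1 := norm_inner_le_norm (𝕜 := ℂ) y.fst x.fst
            have g2 := norm_inner_le_norm (𝕜 := ℂ) y.snd x.snd
            linarith [mul_comm ‖y.fst‖ ‖x.fst‖ ▸ g1, mul_comm ‖y.snd‖ ‖x.snd‖ ▸ g2]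
    have hz : (inner ℂ y (T x) : ℂ) = inner ℂ y.fst (S x.snd) := by
      rw [hT x, WithLp.prod_inner_apply]
      simp [WithLp.equiv_symm_apply, WithLp.toLp_fst, WithLp.toLp_snd, WithLp.ofLp_snd]
    have hzb : ‖(inner ℂ y (T x) : ℂ)‖ ≤ ‖x.snd‖ * ‖y.fst‖ * ‖S‖ := by
      rw [hz]
      calc ‖(inner ℂ y.fst (S x.snd) : ℂ)‖ ≤ ‖y.fst‖ * ‖S x.snd‖ := by
            have := norm_inner_le_norm (𝕜 := ℂ) y.fst (S x.snd)
            exact this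
        _ ≤ ‖y.fst‖ * (‖S‖ * ‖x.snd‖) := by
            exact mul_le_mul_of_nonneg_left (S.le_opNorm _) (norm_nonneg _)
        _ = ‖x.snd‖ * ‖y.fst‖ * ‖S‖ := by ring
    have hscalar : ‖x.snd‖ * ‖y.fst‖ ≤ (1+r)/2 :=
      stmt18_scalar ‖x.fst‖ ‖x.snd‖ ‖y.fst‖ ‖y.snd‖ q r (norm_nonneg _) (norm_nonneg _)
        (norm_nonneg _) (norm_nonneg _) hnx hny (by linarith [hqle]) hq0 hr0 hr2
    calc ‖(inner ℂ y (T x) : ℂ)‖ ≤ ‖x.snd‖ * ‖y.fst‖ * ‖S‖ := hzb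
      _ ≤ (1+r)/2 * ‖S‖ := mul_le_mul_of_nonneg_right hscalar (norm_nonneg _)
  -- assemble
  obtain ⟨v, hv⟩ := exists_ne (0 : H)
  set e : H := ((‖v‖⁻¹ : ℝ) : ℂ) • v with hedef
  have he : ‖e‖ = 1 := by
    rw [hedef, norm_smul]
    simp [norm_inv, abs_of_nonneg (norm_nonneg v)]
    exact inv_mul_cancel₀ (norm_ne_zero_iff.2 hv)
  have hA_ne : A.Nonempty := ⟨_, mem_gen e he⟩
  have hbdd : BddAbove A := ⟨M, hub⟩
  have hhalf : 0 < (1+r)/2 := by linarith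
  have hle : sSup A ≤ M := csSup_le hA_ne hub
  have hW0 : 0 ≤ sSup A :=
    le_trans (by positivity) (le_csSup hbdd (mem_gen e he))
  set c := sSup A / ((1+r)/2) with hcdef
  have hc0 : 0 ≤ c := div_nonneg hW0 hhalf.le
  have hhom : ∀ e' : H, ‖(inner ℂ e' (S e') : ℂ)‖ ≤ c * ‖e'‖^2 := by
    intro e'
    by_cases h0 : e' = 0
    · simp [h0]
    · have hep : 0 < ‖e'‖ := norm_pos_iff.mpr h0
      set u : H := ((‖e'‖⁻¹ : ℝ) : ℂ) • e' with hudef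
      have hu : ‖u‖ = 1 := by
        rw [hudef, norm_smul]
        simp [norm_inv]
        exact inv_mul_cancel₀ (norm_ne_zero_iff.2 h0)
      have hkey : (1+r)/2 * ‖(inner ℂ u (S u) : ℂ)‖ ≤ sSup A :=
        le_csSup hbdd (mem_gen u hu)
      have hsc : (inner ℂ u (S u) : ℂ) = ((‖e'‖⁻¹^2 : ℝ) : ℂ) * inner ℂ e' (S e') := by
        rw [hudef, inner_smul_left, map_smul, inner_smul_right, Complex.conj_ofReal]
        push_cast
        ring
      have habs : ‖(inner ℂ u (S u) : ℂ)‖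
          = ‖e'‖⁻¹^2 * ‖(inner ℂ e' (S e') : ℂ)‖ := by
        rw [hsc, norm_mul, Complex.norm_real, Real.norm_eq_abs, abs_of_nonneg (by positivity)]
      rw [habs] at hkey
      have goal1 : (1+r)/2 * ‖(inner ℂ e' (S e') : ℂ)‖ ≤ sSup A * ‖e'‖^2 := by
        have hne : ‖e'‖ ≠ 0 := ne_of_gt hep
        calc (1+r)/2 * ‖(inner ℂ e' (S e') : ℂ)‖
            = ‖e'‖^2 * ((1+r)/2 * (‖e'‖⁻¹^2 * ‖(inner ℂ e' (S e') : ℂ)‖)) := by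
              field_simp
          _ ≤ ‖e'‖^2 * sSup A := mul_le_mul_of_nonneg_left hkey (sq_nonneg _)
          _ = sSup A * ‖e'‖^2 := mul_comm _ _
      rw [hcdef, div_mul_eq_mul_div, le_div_iff₀ hhalf]
      linarith [goal1]
  have hnorm : ‖S‖ ≤ c := stmt18_norm_le S hSsa c hc0 hhom
  have hge : M ≤ sSup A := by
    rw [hMdef]
    calc (1+r)/2 * ‖S‖ ≤ (1+r)/2 * c := mul_le_mul_of_nonneg_left hnorm hhalf.le
      _ = sSup A := by rw [hcdef]; field_simp
  have hwq : wq (↑q) T = sSup A := rfl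
  rw [hwq]
  exact le_antisymm hle hge
end
end

section
/- Let H₁, H₂, H₃ be complex Hilbert spaces, let S₁ : H₂ → H₁ and S₂ : H₃ → H₂ be bounded operators, let K = H₁ ⊕ H₂ ⊕ H₃ be the Hilbert-space direct sum, and define the bounded operator T on K by T(x₁, x₂, x₃) = (S₁ x₂, S₂ x₃, 0). Let q ∈ D and set M = max{‖S₁‖, ‖S₂‖}. Then w_q(T) ≤ √2·M if |q| ≤ 1/√2, and w_q(T) ≤ ((√2 + |q| + √(1−|q|²))/2)·M if |q| > 1/√2. -/
noncomputable section

theorem stmt_19 {H₁ H₂ H₃ : Type*}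
    [NormedAddCommGroup H₁] [InnerProductSpace ℂ H₁]
    [NormedAddCommGroup H₂] [InnerProductSpace ℂ H₂]
    [NormedAddCommGroup H₃] [InnerProductSpace ℂ H₃]
    (S₁ : H₂ →L[ℂ] H₁) (S₂ : H₃ →L[ℂ] H₂)
    (q : ℂ) (hq : ‖q‖ ≤ 1)
    (T : WithLp 2 (H₁ × WithLp 2 (H₂ × H₃)) →L[ℂ] WithLp 2 (H₁ × WithLp 2 (H₂ × H₃)))
    (hT : ∀ p : WithLp 2 (H₁ × WithLp 2 (H₂ × H₃)),
      T p = (WithLp.equiv 2 (H₁ × WithLp 2 (H₂ × H₃))).symm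
        (S₁ ((WithLp.equiv 2 (H₂ × H₃)) ((WithLp.equiv 2 (H₁ × WithLp 2 (H₂ × H₃)) p).2)).1,
          (WithLp.equiv 2 (H₂ × H₃)).symm
            (S₂ ((WithLp.equiv 2 (H₂ × H₃))
              ((WithLp.equiv 2 (H₁ × WithLp 2 (H₂ × H₃)) p).2)).2, 0))) :
    (‖q‖ ≤ 1 / Real.sqrt 2 → wq q T ≤ Real.sqrt 2 * max ‖S₁‖ ‖S₂‖) ∧
      (1 / Real.sqrt 2 < ‖q‖ →
        wq q T ≤ (Real.sqrt 2 + ‖q‖ + Real.sqrt (1 - ‖q‖ ^ 2)) / 2 *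
          max ‖S₁‖ ‖S₂‖) := by
  set M : ℝ := max ‖S₁‖ ‖S₂‖ with hM
  have hM0 : 0 ≤ M := le_trans (norm_nonneg _) (le_max_left _ _)
  have hS1 : ‖S₁‖ ≤ M := le_max_left _ _
  have hS2 : ‖S₂‖ ≤ M := le_max_right _ _
  -- pointwise norm bound on T
  have hTx : ∀ x : WithLp 2 (H₁ × WithLp 2 (H₂ × H₃)), ‖T x‖ ≤ M * ‖x‖ := by
    intro x
    rw [hT]
    set a : H₂ := ((WithLp.equiv 2 (H₂ × H₃)) ((WithLp.equiv 2 (H₁ × WithLp 2 (H₂ × H₃)) x).2)).1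
    set b : H₃ := ((WithLp.equiv 2 (H₂ × H₃)) ((WithLp.equiv 2 (H₁ × WithLp 2 (H₂ × H₃)) x).2)).2
    have hsq : ‖(WithLp.equiv 2 (H₁ × WithLp 2 (H₂ × H₃))).symm
        (S₁ a, (WithLp.equiv 2 (H₂ × H₃)).symm (S₂ b, 0))‖ ^ 2
        = ‖S₁ a‖ ^ 2 + ‖S₂ b‖ ^ 2 := by
      rw [WithLp.prod_norm_sq_eq_of_L2, WithLp.prod_norm_sq_eq_of_L2]
      simp
    have hxsq : ‖a‖ ^ 2 + ‖b‖ ^ 2 ≤ ‖x‖ ^ 2 := by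
      have h1 : ‖x‖ ^ 2 = ‖(WithLp.equiv 2 (H₁ × WithLp 2 (H₂ × H₃)) x).1‖ ^ 2 +
          (‖a‖ ^ 2 + ‖b‖ ^ 2) := by
        rw [WithLp.prod_norm_sq_eq_of_L2, WithLp.prod_norm_sq_eq_of_L2]
        rfl
      nlinarith [sq_nonneg ‖(WithLp.equiv 2 (H₁ × WithLp 2 (H₂ × H₃)) x).1‖]
    have hb1 : ‖S₁ a‖ ≤ M * ‖a‖ :=
      le_trans (S₁.le_opNorm a) (by gcongr)
    have hb2 : ‖S₂ b‖ ≤ M * ‖b‖ :=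
      le_trans (S₂.le_opNorm b) (by gcongr)
    have hsq2 : ‖(WithLp.equiv 2 (H₁ × WithLp 2 (H₂ × H₃))).symm
        (S₁ a, (WithLp.equiv 2 (H₂ × H₃)).symm (S₂ b, 0))‖ ^ 2 ≤ (M * ‖x‖) ^ 2 := by
      rw [hsq]
      have : ‖S₁ a‖ ^ 2 + ‖S₂ b‖ ^ 2 ≤ M ^ 2 * (‖a‖ ^ 2 + ‖b‖ ^ 2) := by
        nlinarith [norm_nonneg (S₁ a), norm_nonneg (S₂ b), norm_nonneg a, norm_nonneg b,
          mul_nonneg hM0 (norm_nonneg a), mul_nonneg hM0 (norm_nonneg b)]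
      calc ‖S₁ a‖ ^ 2 + ‖S₂ b‖ ^ 2 ≤ M ^ 2 * (‖a‖ ^ 2 + ‖b‖ ^ 2) := this
        _ ≤ M ^ 2 * ‖x‖ ^ 2 := by nlinarith [sq_nonneg M]
        _ = (M * ‖x‖) ^ 2 := by ring
    exact le_of_pow_le_pow_left₀ (by norm_num) (mul_nonneg hM0 (norm_nonneg x)) hsq2
  -- wq T ≤ M
  have hwq : wq q T ≤ M := by
    apply Real.sSup_le _ hM0
    rintro r ⟨z, ⟨x, y, hx, hy, -, hz⟩, rfl⟩
    have : ‖z‖ = ‖(inner ℂ y (T x) : ℂ)‖ := by rw [hz]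
    simp only [this]
    calc ‖(inner ℂ y (T x) : ℂ)‖ ≤ ‖y‖ * ‖T x‖ := norm_inner_le_norm y (T x)
      _ ≤ 1 * (M * ‖x‖) := by
          apply mul_le_mul (le_of_eq hy) (hTx x) (norm_nonneg _) zero_le_one
      _ = M := by rw [hx]; ring
  have hs2 : Real.sqrt 2 ^ 2 = 2 := Real.sq_sqrt (by norm_num)
  have hs2n : (0:ℝ) ≤ Real.sqrt 2 := Real.sqrt_nonneg 2
  have hs2ge1 : (1:ℝ) ≤ Real.sqrt 2 := by nlinarith
  constructor
  · intro _
    calc wq q T ≤ M := hwq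
      _ ≤ Real.sqrt 2 * M := by nlinarith
  · intro hq2
    have hq0 : 1 / Real.sqrt 2 < ‖q‖ := hq2
    have hfac : 2 ≤ Real.sqrt 2 + ‖q‖ + Real.sqrt (1 - ‖q‖ ^ 2) := by
      have hr : (0:ℝ) ≤ Real.sqrt (1 - ‖q‖ ^ 2) := Real.sqrt_nonneg _
      have : 1 / Real.sqrt 2 = Real.sqrt 2 / 2 := by
        rw [div_eq_div_iff (by positivity) (by norm_num)]; nlinarith
      nlinarith
    calc wq q T ≤ M := hwq
      _ ≤ (Real.sqrt 2 + ‖q‖ + Real.sqrt (1 - ‖q‖ ^ 2)) / 2 * M := by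
        nlinarith
end
end
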